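/- If M is an m × n matrix over a commutative ring with m ≠ n (say of sizes (n+ℓ) × n or n × (n+ℓ) with ℓ > 0), then the Pfaffian of the skew-symmetric block matrix [[0, M], [-Mᵀ, 0]] (of size (m+n) × (m+n)) is zero. -/
import Mathlib


open Finset Matrix

/-- The Pfaffian of an `n × n` matrix over a commutative ring, defined by the cofactor-type
expansion along the last column: `Pf` of the empty matrix is `1`, `Pf` of odd-size matrices is
`0`, and `Pf A = ∑_i (-1)^{i+j+H(j-i)} A_{i,j} Pf(A_{î,ĵ})` with `j` the last index. -/
def pf {R : Type*} [CommRing R] : (n : ℕ) → Matrix (Fin n) (Fin n) R → R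
  | 0, _ => 1
  | 1, _ => 0
  | (n + 2), A =>
      ∑ i : Fin (n + 1),
        (-1) ^ (i : ℕ) * A i.castSucc (Fin.last (n + 1)) *
          pf n (A.submatrix (fun k => (i.succAbove k).castSucc)
            (fun k => (i.succAbove k).castSucc))

lemma pf_eq_zero_of_weight {R : Type*} [CommRing R] :
    ∀ (n : ℕ) (A : Matrix (Fin n) (Fin n) R) (w : Fin n → ℤ),
      (∀ i, w i = 1 ∨ w i = -1) → (∀ i j, w i = w j → A i j = 0) →
      (∑ i, w i) ≠ 0 → pf n A = 0
  | 0, A, w, hw, hA, hs => absurd (by simp) hs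
  | 1, _, _, _, _, _ => rfl
  | (n + 2), A, w, hw, hA, hs => by
    rw [pf]
    apply Finset.sum_eq_zero
    intro i _
    by_cases hwi : w i.castSucc = w (Fin.last (n + 1))
    · rw [hA _ _ hwi]; ring
    · rw [pf_eq_zero_of_weight n
        (A.submatrix (fun k => (i.succAbove k).castSucc) (fun k => (i.succAbove k).castSucc))
        (fun k => w ((i.succAbove k).castSucc))
        (fun k => hw _) (fun k l hkl => hA _ _ hkl) ?_]
      · ring
      · have hsplit : ∑ j, w j =
            w i.castSucc + (∑ k : Fin n, w ((i.succAbove k).castSucc)) +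
              w (Fin.last (n + 1)) := by
          rw [Fin.sum_univ_castSucc (f := w),
            Fin.sum_univ_succAbove (fun j : Fin (n + 1) => w j.castSucc) i]
        have hz : w i.castSucc + w (Fin.last (n + 1)) = 0 := by
          rcases hw i.castSucc with h1 | h1 <;> rcases hw (Fin.last (n + 1)) with h2 | h2 <;>
            omega
        intro hc
        have hc' : ∑ k : Fin n, w ((i.succAbove k).castSucc) = 0 := hc
        apply hs
        rw [hsplit]
        omega

/-- If `M` is a non-square `m × n` matrix over a commutative ring (`m ≠ n`), then the Pfaffian
of the skew-symmetric block matrix `[[0, M], [-Mᵀ, 0]]` of size `(m+n) × (m+n)` is zero. -/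
theorem pf_fromBlocks_nonSquare {R : Type*} [CommRing R] {m n : ℕ} (h : m ≠ n)
    (M : Matrix (Fin m) (Fin n) R) :
    pf (m + n)
      ((Matrix.fromBlocks 0 M (-Mᵀ) 0).submatrix finSumFinEquiv.symm finSumFinEquiv.symm)
      = 0 := by
  apply pf_eq_zero_of_weight (m + n) _
    (fun j => if (finSumFinEquiv.symm j).isLeft then 1 else -1)
  · intro i
    by_cases hi : (finSumFinEquiv.symm i).isLeft <;> simp [hi]
  · intro i j hij
    simp only [Matrix.submatrix_apply]
    rcases hl : finSumFinEquiv.symm i with a | a <;> rcases hr : finSumFinEquiv.symm j with b | b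
    · simp [Matrix.fromBlocks]
    · simp [hl, hr] at hij
    · simp [hl, hr] at hij
    · simp [Matrix.fromBlocks]
  · have : ∑ j : Fin (m + n),
        (if (finSumFinEquiv.symm j).isLeft then (1 : ℤ) else -1) =
        ∑ x : Fin m ⊕ Fin n, (if x.isLeft then (1 : ℤ) else -1) := by
      rw [← Equiv.sum_comp finSumFinEquiv
        (fun j => if (finSumFinEquiv.symm j).isLeft then (1 : ℤ) else -1)]
      simp
    rw [this, Fintype.sum_sum_type]
    simp
    omega
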